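/- Each upper-bounding inequality of the ideal non-extended formulation is facet-defining under strict activity: if M⁻ < 0 < M⁺, then for every I ⊆ supp(w) there exist η + 2 affinely independent points of P, each of which satisfies the inequality y ≤ (∑ i ∈ I, w i * (x i − L̆ i * (1 − z))) + (b + ∑ i ∉ I, w i * Ŭ i) * z with equality. -/

import Mathlib

open Finset

/-- The affine function `f(x) = w · x + b`. -/
noncomputable def fAff {η : ℕ} (w : Fin η → ℝ) (b : ℝ) (x : Fin η → ℝ) : ℝ :=
  (∑ i, w i * x i) + b

/-- The rectified linear unit. -/
noncomputable def ReLU (v : ℝ) : ℝ := max 0 v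

/-- The box `[L, U]`. -/
def Box {η : ℕ} (L U : Fin η → ℝ) : Set (Fin η → ℝ) :=
  {x | ∀ i, L i ≤ x i ∧ x i ≤ U i}

/-- `L̆ i`. -/
noncomputable def Lbreve {η : ℕ} (w L U : Fin η → ℝ) (i : Fin η) : ℝ :=
  if 0 ≤ w i then L i else U i

/-- `Ŭ i`. -/
noncomputable def Ubreve {η : ℕ} (w L U : Fin η → ℝ) (i : Fin η) : ℝ :=
  if 0 ≤ w i then U i else L i

/-- The graph of the ReLU neuron over the box. -/
noncomputable def grSet {η : ℕ} (w : Fin η → ℝ) (b : ℝ) (L U : Fin η → ℝ) :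
    Set ((Fin η → ℝ) × ℝ) :=
  {p | ∃ x ∈ Box L U, p = (x, ReLU (fAff w b x))}

/-- The LP relaxation `P` of the ideal non-extended formulation. A point is
`(x, y, z)` with `x = p.1`, `y = p.2.1`, `z = p.2.2`. -/
noncomputable def Pset {η : ℕ} (w : Fin η → ℝ) (b : ℝ) (L U : Fin η → ℝ) :
    Set ((Fin η → ℝ) × ℝ × ℝ) :=
  {p | p.1 ∈ Box L U ∧ 0 ≤ p.2.1 ∧ 0 ≤ p.2.2 ∧ p.2.2 ≤ 1 ∧ fAff w b p.1 ≤ p.2.1 ∧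
    ∀ I : Finset (Fin η), (∀ i ∈ I, w i ≠ 0) →
      p.2.1 ≤ (∑ i ∈ I, w i * (p.1 i - Lbreve w L U i * (1 - p.2.2)))
        + (b + ∑ i ∈ Iᶜ, w i * Ubreve w L U i) * p.2.2}

/-- The LP relaxation `R` of the big-`M` formulation. -/
noncomputable def Rset {η : ℕ} (w : Fin η → ℝ) (b : ℝ) (L U : Fin η → ℝ) :
    Set ((Fin η → ℝ) × ℝ × ℝ) :=
  {p | p.1 ∈ Box L U ∧ 0 ≤ p.2.1 ∧ 0 ≤ p.2.2 ∧ p.2.2 ≤ 1 ∧ fAff w b p.1 ≤ p.2.1 ∧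
    p.2.1 ≤ fAff w b p.1 - ((∑ i, w i * Lbreve w L U i) + b) * (1 - p.2.2) ∧
    p.2.1 ≤ ((∑ i, w i * Ubreve w L U i) + b) * p.2.2}

/-- The LP relaxation `Q` of the multiple-choice extended formulation. A point is
`(x, y, z, x⁰, x¹, y⁰, y¹)`. -/
noncomputable def Qset {η : ℕ} (w : Fin η → ℝ) (b : ℝ) (L U : Fin η → ℝ) :
    Set ((Fin η → ℝ) × ℝ × ℝ × (Fin η → ℝ) × (Fin η → ℝ) × ℝ × ℝ) :=
  {q | match q with
    | (x, y, z, x0, x1, y0, y1) =>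
      x = x0 + x1 ∧ y = y0 + y1 ∧ y0 = 0 ∧
      (∑ i, w i * x0 i) + b * (1 - z) ≤ 0 ∧
      y1 = (∑ i, w i * x1 i) + b * z ∧ 0 ≤ y1 ∧
      (∀ i, L i * (1 - z) ≤ x0 i ∧ x0 i ≤ U i * (1 - z)) ∧
      (∀ i, L i * z ≤ x1 i ∧ x1 i ≤ U i * z) ∧
      0 ≤ z ∧ z ≤ 1}

/-- Auxiliary: sum of `w j * (update x i v) j` over a finset. -/
lemma sum_mul_update {n : ℕ} (s : Finset (Fin n)) (w x : Fin n → ℝ) (i : Fin n) (v : ℝ) :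
    ∑ j ∈ s, w j * Function.update x i v j
      = (∑ j ∈ s, w j * x j) + (if i ∈ s then w i * (v - x i) else 0) := by
  classical
  by_cases h : i ∈ s
  · rw [if_pos h]
    have h1 : ∀ j, w j * Function.update x i v j
        = Function.update (fun j => w j * x j) i (w i * v) j := by
      intro j
      by_cases hj : j = i
      · subst hj; simp
      · simp [Function.update_of_ne hj]
    have h2 : ∀ j, w j * x j = Function.update (fun j => w j * x j) i (w i * x i) j := by
      intro j
      by_cases hj : j = i
      · subst hj; simp
      · simp [Function.update_of_ne hj]
    rw [Finset.sum_congr rfl (fun j _ => h1 j), Finset.sum_update_of_mem h,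
      Finset.sum_eq_sum_sdiff_singleton_add h (fun j => w j * x j)]
    ring
  · rw [if_neg h, add_zero]
    refine Finset.sum_congr rfl fun j hj => ?_
    rw [Function.update_of_ne]
    rintro rfl; exact h hj

/-- Auxiliary linear map used to certify affine independence. -/
noncomputable def Tlin {n m : ℕ} (A : Fin m → Fin n → ℝ) (B : Fin m → ℝ) :
    ((Fin n → ℝ) × ℝ × ℝ) →ₗ[ℝ] (Fin m → ℝ) where
  toFun p := fun j => (∑ i, A j i * p.1 i) + B j * p.2.2
  map_add' p q := by
    funext j
    simp only [Prod.fst_add, Prod.snd_add, Pi.add_apply, mul_add, Finset.sum_add_distrib]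
    ring
  map_smul' r p := by
    funext j
    simp only [Prod.smul_fst, Prod.smul_snd, Pi.smul_apply, smul_eq_mul, RingHom.id_apply]
    rw [mul_add, Finset.mul_sum]
    congr 1
    · exact Finset.sum_congr rfl fun x _ => by ring
    · ring

lemma Tlin_apply {n m : ℕ} (A : Fin m → Fin n → ℝ) (B : Fin m → ℝ)
    (p : (Fin n → ℝ) × ℝ × ℝ) (j : Fin m) :
    Tlin A B p j = (∑ i, A j i * p.1 i) + B j * p.2.2 := rfl

lemma mem_Pset_mk {η : ℕ} (w : Fin η → ℝ) (b : ℝ) (L U : Fin η → ℝ)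
    (X : Fin η → ℝ) (y z : ℝ)
    (h1 : ∀ i, L i ≤ X i ∧ X i ≤ U i) (h2 : 0 ≤ y) (h3 : 0 ≤ z) (h4 : z ≤ 1)
    (h5 : fAff w b X ≤ y)
    (h6 : ∀ J : Finset (Fin η), (∀ i ∈ J, w i ≠ 0) →
      y ≤ (∑ i ∈ J, w i * (X i - Lbreve w L U i * (1 - z)))
        + (b + ∑ i ∈ Jᶜ, w i * Ubreve w L U i) * z) :
    (X, y, z) ∈ Pset w b L U := ⟨h1, h2, h3, h4, h5, h6⟩

lemma eq_goal_mk {η : ℕ} (w : Fin η → ℝ) (b : ℝ) (L U : Fin η → ℝ) (I : Finset (Fin η))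
    (X : Fin η → ℝ) (y z : ℝ)
    (h : y = (∑ i ∈ I, w i * (X i - Lbreve w L U i * (1 - z)))
      + (b + ∑ i ∈ Iᶜ, w i * Ubreve w L U i) * z) :
    ((X, y, z) : (Fin η → ℝ) × ℝ × ℝ).2.1
      = (∑ i ∈ I, w i * (((X, y, z) : (Fin η → ℝ) × ℝ × ℝ).1 i
          - Lbreve w L U i * (1 - ((X, y, z) : (Fin η → ℝ) × ℝ × ℝ).2.2)))
        + (b + ∑ i ∈ Iᶜ, w i * Ubreve w L U i)
          * ((X, y, z) : (Fin η → ℝ) × ℝ × ℝ).2.2 := h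

theorem upper_bounding_facet_defining {η : ℕ} (w : Fin η → ℝ) (b : ℝ)
    (L U : Fin η → ℝ) (hLU : ∀ i, L i < U i)
    (hMneg : (∑ i, w i * Lbreve w L U i) + b < 0)
    (hMpos : 0 < (∑ i, w i * Ubreve w L U i) + b)
    (I : Finset (Fin η)) (hI : ∀ i ∈ I, w i ≠ 0) :
    ∃ p : Fin (η + 2) → (Fin η → ℝ) × ℝ × ℝ,
      AffineIndependent ℝ p ∧
      ∀ k, p k ∈ Pset w b L U ∧
        (p k).2.1 = (∑ i ∈ I, w i * ((p k).1 i - Lbreve w L U i * (1 - (p k).2.2)))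
          + (b + ∑ i ∈ Iᶜ, w i * Ubreve w L U i) * (p k).2.2 := by
  classical
  -- scalar abbreviations
  obtain ⟨Mp, hMpdef⟩ : ∃ x : ℝ, x = (∑ i, w i * Ubreve w L U i) + b := ⟨_, rfl⟩
  obtain ⟨Mm, hMmdef⟩ : ∃ x : ℝ, x = (∑ i, w i * Lbreve w L U i) + b := ⟨_, rfl⟩
  have hMp : 0 < Mp := hMpdef ▸ hMpos
  have hMm : Mm < 0 := hMmdef ▸ hMneg
  obtain ⟨s, hs⟩ : ∃ s : Fin η → ℝ, ∀ i, s i = Ubreve w L U i - Lbreve w L U i :=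
    ⟨_, fun _ => rfl⟩
  obtain ⟨a, ha⟩ : ∃ a : Fin η → ℝ, ∀ i, a i = w i * s i := ⟨_, fun _ => rfl⟩
  have hLb : ∀ i, L i ≤ Lbreve w L U i ∧ Lbreve w L U i ≤ U i := by
    intro i; unfold Lbreve; split
    · exact ⟨le_rfl, (hLU i).le⟩
    · exact ⟨(hLU i).le, le_rfl⟩
  have hUb : ∀ i, L i ≤ Ubreve w L U i ∧ Ubreve w L U i ≤ U i := by
    intro i; unfold Ubreve; split
    · exact ⟨(hLU i).le, le_rfl⟩
    · exact ⟨le_rfl, (hLU i).le⟩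
  have hapos : ∀ i, 0 ≤ a i := by
    intro i
    rw [ha i, hs i]
    unfold Lbreve Ubreve
    split
    · next h => nlinarith [hLU i]
    · next h => nlinarith [hLU i]
  have hsne : ∀ i, s i ≠ 0 := by
    intro i
    rw [hs i]
    unfold Lbreve Ubreve
    split
    · exact sub_ne_zero.mpr (hLU i).ne'
    · exact sub_ne_zero.mpr (hLU i).ne
  -- the perturbation sizes
  obtain ⟨θ, hθpos, hθle, hθa⟩ : ∃ θ : Fin η → ℝ,
      (∀ i, 0 < θ i) ∧ (∀ i, θ i ≤ 1) ∧ (∀ i, θ i * a i ≤ -Mm) := by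
    refine ⟨fun i => -Mm / (a i + -Mm), fun i => ?_, fun i => ?_, fun i => ?_⟩
    · exact div_pos (by linarith) (by have := hapos i; linarith)
    · rw [div_le_one (by have := hapos i; linarith)]
      have := hapos i; linarith
    · rw [div_mul_eq_mul_div, div_le_iff₀ (by have := hapos i; linarith)]
      have := hapos i; nlinarith
  obtain ⟨φ, hφpos, hφle, hφa⟩ : ∃ φ : Fin η → ℝ,
      (∀ i, 0 < φ i) ∧ (∀ i, φ i ≤ 1) ∧ (∀ i, φ i * a i ≤ Mp) := by
    refine ⟨fun i => Mp / (a i + Mp), fun i => ?_, fun i => ?_, fun i => ?_⟩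
    · exact div_pos hMp (by have := hapos i; linarith)
    · rw [div_le_one (by have := hapos i; linarith)]
      have := hapos i; linarith
    · rw [div_mul_eq_mul_div, div_le_iff₀ (by have := hapos i; linarith)]
      have := hapos i; nlinarith
  -- the family of perturbed points
  obtain ⟨Q, hQin, hQout⟩ : ∃ Q : Fin η → (Fin η → ℝ) × ℝ × ℝ,
      (∀ i ∈ I, Q i = (Function.update (Ubreve w L U) i (Ubreve w L U i - φ i * s i),
        Mp - φ i * a i, 1)) ∧
      (∀ i ∉ I, Q i = (Function.update (Lbreve w L U) i (Lbreve w L U i + θ i * s i),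
        0, 0)) := by
    exact ⟨fun i => if i ∈ I then
        (Function.update (Ubreve w L U) i (Ubreve w L U i - φ i * s i), Mp - φ i * a i, 1)
      else (Function.update (Lbreve w L U) i (Lbreve w L U i + θ i * s i), 0, 0),
      fun i hi => by simp [hi], fun i hi => by simp [hi]⟩
  refine ⟨Fin.cons (Lbreve w L U, 0, 0) (Fin.snoc Q (Ubreve w L U, Mp, 1)), ?_, ?_⟩
  · -- affine independence
    obtain ⟨A, hAc, hAl⟩ : ∃ A : Fin (η+1) → Fin η → ℝ,
        (∀ i' : Fin η, A i'.castSucc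
          = fun i => if i = i' then (if i' ∈ I then (-1:ℝ) else 1) else 0) ∧
        (A (Fin.last η) = fun i => if i ∈ I then (φ i * s i)⁻¹ else 0) :=
      ⟨Fin.lastCases (fun i => if i ∈ I then (φ i * s i)⁻¹ else 0)
        (fun i' i => if i = i' then (if i' ∈ I then (-1:ℝ) else 1) else 0),
        fun i' => Fin.lastCases_castSucc i', Fin.lastCases_last⟩
    obtain ⟨B, hBc, hBl⟩ : ∃ B : Fin (η+1) → ℝ,
        (∀ i' : Fin η, B i'.castSucc = if i' ∈ I then s i' else -(s i')) ∧
        (B (Fin.last η) = 1 - ∑ i ∈ I, (φ i)⁻¹) :=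
      ⟨Fin.lastCases (1 - ∑ i ∈ I, (φ i)⁻¹)
        (fun i' => if i' ∈ I then s i' else -(s i')),
        fun i' => Fin.lastCases_castSucc i', Fin.lastCases_last⟩
    obtain ⟨c, hcc, hcl⟩ : ∃ c : Fin (η+1) → ℝ,
        (∀ i' : Fin η, c i'.castSucc = if i' ∈ I then φ i' * s i' else θ i' * s i') ∧
        (c (Fin.last η) = 1) :=
      ⟨Fin.lastCases 1 (fun i' => if i' ∈ I then φ i' * s i' else θ i' * s i'),
        fun i' => Fin.lastCases_castSucc i', Fin.lastCases_last⟩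
    have hφsne : ∀ i, φ i * s i ≠ 0 := fun i => mul_ne_zero (hφpos i).ne' (hsne i)
    have hcne : ∀ j, c j ≠ 0 := by
      refine Fin.lastCases ?_ (fun i' => ?_)
      · rw [hcl]; exact one_ne_zero
      · rw [hcc i']
        by_cases h : i' ∈ I
        · rw [if_pos h]; exact hφsne i'
        · rw [if_neg h]; exact mul_ne_zero (hθpos i').ne' (hsne i')
    have hsum1 : ∀ (i' : Fin η) (x : Fin η → ℝ),
        (∑ i, A i'.castSucc i * x i) = (if i' ∈ I then -(x i') else x i') := by
      intro i' x
      rw [hAc i']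
      have h1 : ∀ i : Fin η, (if i = i' then (if i' ∈ I then (-1:ℝ) else 1) else 0) * x i
          = if i = i' then (if i' ∈ I then -(x i) else x i) else 0 := by
        intro i
        by_cases h : i = i'
        · by_cases h2 : i' ∈ I <;> simp [h, h2]
        · simp [h]
      rw [Finset.sum_congr rfl (fun i _ => h1 i), Finset.sum_ite_eq' univ i']
      simp
    have hsum2 : ∀ (x : Fin η → ℝ),
        (∑ i, A (Fin.last η) i * x i) = ∑ i ∈ I, (φ i * s i)⁻¹ * x i := by
      intro x
      rw [hAl]
      simp only [ite_mul, zero_mul]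
      rw [Finset.sum_ite_mem, Finset.univ_inter]
    have hval : ∀ j : Fin (η+1),
        Tlin A B ((Fin.snoc Q (Ubreve w L U, Mp, 1) : Fin (η+1) → (Fin η → ℝ) × ℝ × ℝ) j
          - ((Lbreve w L U, 0, 0) : (Fin η → ℝ) × ℝ × ℝ))
          = Pi.single j (c j) := by
      refine Fin.lastCases ?_ (fun i => ?_)
      · -- the point (Ŭ, M⁺, 1)
        rw [Fin.snoc_last, Prod.mk_sub_mk, Prod.mk_sub_mk]
        funext j'
        rw [Tlin_apply]
        dsimp only
        refine Fin.lastCases ?_ (fun i' => ?_) j'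
        · rw [hsum2]
          have h1 : ∀ i ∈ I, (φ i * s i)⁻¹ * ((Ubreve w L U - Lbreve w L U) i)
              = (φ i)⁻¹ := by
            intro i _
            rw [Pi.sub_apply, ← hs i, mul_inv, mul_assoc, inv_mul_cancel₀ (hsne i), mul_one]
          rw [Finset.sum_congr rfl h1, hBl, hcl, Pi.single_eq_same]
          ring
        · rw [hsum1 i', hBc i']
          have hv : (Ubreve w L U - Lbreve w L U) i' = s i' := by
            rw [Pi.sub_apply, hs i']
          rw [hv, Pi.single_eq_of_ne (Fin.castSucc_lt_last i').ne]
          by_cases h : i' ∈ I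
          · rw [if_pos h, if_pos h]; ring
          · rw [if_neg h, if_neg h]; ring
      · -- the perturbed points
        rw [Fin.snoc_castSucc]
        by_cases hiI : i ∈ I
        · rw [hQin i hiI, Prod.mk_sub_mk, Prod.mk_sub_mk]
          have hX : ∀ jj, (Function.update (Ubreve w L U) i (Ubreve w L U i - φ i * s i)
              - Lbreve w L U) jj = s jj - (if jj = i then φ i * s i else 0) := by
            intro jj
            rw [Pi.sub_apply]
            by_cases h : jj = i
            · subst h; rw [Function.update_self, if_pos rfl, hs jj]; ring
            · rw [Function.update_of_ne h, if_neg h, hs jj]; ring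
          funext j'
          rw [Tlin_apply]
          dsimp only
          refine Fin.lastCases ?_ (fun i' => ?_) j'
          · rw [hsum2]
            have h1 : ∀ i' ∈ I, (φ i' * s i')⁻¹
                * ((Function.update (Ubreve w L U) i (Ubreve w L U i - φ i * s i)
                    - Lbreve w L U) i')
                = (φ i')⁻¹ - (if i' = i then 1 else 0) := by
              intro i' _
              rw [hX i', mul_sub]
              congr 1
              · rw [mul_inv, mul_assoc, inv_mul_cancel₀ (hsne i'), mul_one]
              · by_cases h : i' = i
                · subst h; rw [if_pos rfl, if_pos rfl, inv_mul_cancel₀ (hφsne i')]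
                · rw [if_neg h, if_neg h, mul_zero]
            rw [Finset.sum_congr rfl h1, Finset.sum_sub_distrib,
              Finset.sum_ite_eq' I i, if_pos hiI, hBl,
              Pi.single_eq_of_ne (Fin.castSucc_lt_last i).ne']
            ring
          · rw [hsum1 i', hBc i', hX i', Pi.single_apply]
            simp only [Fin.castSucc_inj]
            by_cases h : i' = i
            · subst h
              rw [if_pos rfl, if_pos hiI, if_pos hiI, if_pos rfl, hcc i', if_pos hiI]
              ring
            · rw [if_neg h, if_neg h]
              by_cases h2 : i' ∈ I
              · rw [if_pos h2, if_pos h2]; ring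
              · rw [if_neg h2, if_neg h2]; ring
        · rw [hQout i hiI, Prod.mk_sub_mk, Prod.mk_sub_mk]
          have hX : ∀ jj, (Function.update (Lbreve w L U) i (Lbreve w L U i + θ i * s i)
              - Lbreve w L U) jj = if jj = i then θ i * s i else 0 := by
            intro jj
            rw [Pi.sub_apply]
            by_cases h : jj = i
            · subst h; rw [Function.update_self, if_pos rfl]; ring
            · rw [Function.update_of_ne h, if_neg h]; ring
          funext j'
          rw [Tlin_apply]
          dsimp only
          refine Fin.lastCases ?_ (fun i' => ?_) j'
          · rw [hsum2]
            have h1 : ∀ i' ∈ I, (φ i' * s i')⁻¹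
                * ((Function.update (Lbreve w L U) i (Lbreve w L U i + θ i * s i)
                    - Lbreve w L U) i') = 0 := by
              intro i' hi'
              rw [hX i', if_neg (by rintro rfl; exact hiI hi'), mul_zero]
            rw [Finset.sum_congr rfl h1, Finset.sum_const_zero, hBl,
              Pi.single_eq_of_ne (Fin.castSucc_lt_last i).ne']
            ring
          · rw [hsum1 i', hBc i', hX i', Pi.single_apply]
            simp only [Fin.castSucc_inj]
            by_cases h : i' = i
            · subst h
              rw [if_pos rfl, if_neg hiI, if_neg hiI, if_pos rfl, hcc i', if_neg hiI]
              ring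
            · rw [if_neg h, if_neg h]
              by_cases h2 : i' ∈ I
              · rw [if_pos h2, if_pos h2]; ring
              · rw [if_neg h2, if_neg h2]; ring
    rw [affineIndependent_iff_linearIndependent_vsub ℝ _ 0]
    refine LinearIndependent.of_comp (Tlin A B) ?_
    have hcne' : ∀ j, c j ≠ 0 := hcne
    have hbase : LinearIndependent ℝ
        ((fun j => Units.mk0 (c j) (hcne' j)) • ⇑(Pi.basisFun ℝ (Fin (η+1)))) :=
      (Pi.basisFun ℝ (Fin (η+1))).linearIndependent.units_smul _
    have hcomp := hbase.comp
      (fun t : {x : Fin (η+2) // x ≠ 0} => (t : Fin (η+2)).pred t.2)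
      (fun t1 t2 h12 => Subtype.ext (Fin.pred_inj.mp h12))
    convert hcomp using 1
    case e'_5 => rfl
    funext t
    obtain ⟨k, hk⟩ := t
    obtain ⟨j, rfl⟩ : ∃ j : Fin (η+1), j.succ = k := ⟨k.pred hk, Fin.succ_pred k hk⟩
    simp only [Function.comp_apply, Fin.cons_zero, Fin.cons_succ, Fin.pred_succ]
    rw [vsub_eq_sub, hval j, Pi.smul_apply', Pi.basisFun_apply, Units.smul_def,
      Units.val_mk0, ← Pi.single_smul, smul_eq_mul, mul_one]
  · -- membership and tightness
    have key0 : ∀ (J : Finset (Fin η)) (X : Fin η → ℝ),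
        (∑ j ∈ J, w j * (X j - Lbreve w L U j * (1 - (0:ℝ))))
          + (b + ∑ j ∈ Jᶜ, w j * Ubreve w L U j) * 0
          = ∑ j ∈ J, w j * X j - ∑ j ∈ J, w j * Lbreve w L U j := by
      intro J X
      simp [mul_sub, Finset.sum_sub_distrib]
    have key1 : ∀ (J : Finset (Fin η)) (X : Fin η → ℝ),
        (∑ j ∈ J, w j * (X j - Lbreve w L U j * (1 - (1:ℝ))))
          + (b + ∑ j ∈ Jᶜ, w j * Ubreve w L U j) * 1
          = (∑ j ∈ J, w j * X j) + (b + ∑ j ∈ Jᶜ, w j * Ubreve w L U j) := by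
      intro J X
      simp
    intro k
    refine Fin.cases ?_ (fun j => ?_) k
    · -- base point (L̆, 0, 0)
      simp only [Fin.cons_zero]
      refine ⟨mem_Pset_mk w b L U _ _ _ hLb le_rfl le_rfl zero_le_one ?_ ?_,
        eq_goal_mk w b L U I (Lbreve w L U) 0 0 ?_⟩
      · unfold fAff; rw [← hMmdef]; linarith
      · intro J _
        rw [key0 J (Lbreve w L U)]
        simp
      · rw [key0 I (Lbreve w L U)]
        simp
    · -- remaining points
      simp only [Fin.cons_succ]
      refine Fin.lastCases ?_ (fun i => ?_) j
      · -- the point (Ŭ, M⁺, 1)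
        simp only [Fin.snoc_last]
        have hsumc : ∀ J : Finset (Fin η),
            (∑ j ∈ J, w j * Ubreve w L U j) + ∑ j ∈ Jᶜ, w j * Ubreve w L U j
              = ∑ j, w j * Ubreve w L U j :=
          fun J => Finset.sum_add_sum_compl J _
        refine ⟨mem_Pset_mk w b L U _ _ _ hUb hMp.le zero_le_one le_rfl ?_ ?_,
          eq_goal_mk w b L U I (Ubreve w L U) Mp 1 ?_⟩
        · unfold fAff; rw [← hMpdef]
        · intro J _
          rw [key1 J (Ubreve w L U)]
          have := hsumc J
          linarith [hMpdef]
        · rw [key1 I (Ubreve w L U)]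
          have := hsumc I
          linarith [hMpdef]
      · -- the perturbed points
        simp only [Fin.snoc_castSucc]
        by_cases hiI : i ∈ I
        · rw [hQin i hiI]
          have hterm : w i * (Ubreve w L U i - φ i * s i - Ubreve w L U i)
              = -(φ i * a i) := by rw [ha i]; ring
          have hφa0 : 0 ≤ φ i * a i := mul_nonneg (hφpos i).le (hapos i)
          refine ⟨mem_Pset_mk w b L U _ _ _ ?_ (by linarith [hφa i]) zero_le_one le_rfl ?_ ?_,
            eq_goal_mk w b L U I
              (Function.update (Ubreve w L U) i (Ubreve w L U i - φ i * s i))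
              (Mp - φ i * a i) 1 ?_⟩
          · intro j'
            by_cases hj : j' = i
            · subst hj
              rw [Function.update_self, hs j']
              have h1 := hUb j'
              have h2 := hLb j'
              have h3 := hφpos j'
              have h4 := hφle j'
              constructor
              · nlinarith [mul_nonneg (by linarith : (0:ℝ) ≤ 1 - φ j')
                  (by linarith : (0:ℝ) ≤ Ubreve w L U j' - L j'),
                  mul_nonneg h3.le (by linarith : (0:ℝ) ≤ Lbreve w L U j' - L j')]
              · nlinarith [mul_nonneg (by linarith : (0:ℝ) ≤ 1 - φ j')
                  (by linarith : (0:ℝ) ≤ U j' - Ubreve w L U j'),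
                  mul_nonneg h3.le (by linarith : (0:ℝ) ≤ U j' - Lbreve w L U j')]
            · rw [Function.update_of_ne hj]; exact hUb j'
          · unfold fAff
            rw [sum_mul_update univ w (Ubreve w L U) i _]
            rw [if_pos (Finset.mem_univ i)]
            rw [hterm]
            linarith [hMpdef]
          · intro J _
            rw [key1 J _, sum_mul_update J w (Ubreve w L U) i _]
            have hsumc := Finset.sum_add_sum_compl J (fun j => w j * Ubreve w L U j)
            by_cases hiJ : i ∈ J
            · rw [if_pos hiJ, hterm]; linarith [hMpdef]
            · rw [if_neg hiJ]; linarith [hMpdef]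
          · rw [key1 I _, sum_mul_update I w (Ubreve w L U) i _, if_pos hiI, hterm]
            have hsumc := Finset.sum_add_sum_compl I (fun j => w j * Ubreve w L U j)
            linarith [hMpdef]
        · rw [hQout i hiI]
          have hterm : w i * (Lbreve w L U i + θ i * s i - Lbreve w L U i)
              = θ i * a i := by rw [ha i]; ring
          have hθa0 : 0 ≤ θ i * a i := mul_nonneg (hθpos i).le (hapos i)
          refine ⟨mem_Pset_mk w b L U _ _ _ ?_ le_rfl le_rfl zero_le_one ?_ ?_,
            eq_goal_mk w b L U I
              (Function.update (Lbreve w L U) i (Lbreve w L U i + θ i * s i))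
              0 0 ?_⟩
          · intro j'
            by_cases hj : j' = i
            · subst hj
              rw [Function.update_self, hs j']
              have h1 := hUb j'
              have h2 := hLb j'
              have h3 := hθpos j'
              have h4 := hθle j'
              constructor
              · nlinarith [mul_nonneg (by linarith : (0:ℝ) ≤ 1 - θ j')
                  (by linarith : (0:ℝ) ≤ Lbreve w L U j' - L j'),
                  mul_nonneg h3.le (by linarith : (0:ℝ) ≤ Ubreve w L U j' - L j')]
              · nlinarith [mul_nonneg (by linarith : (0:ℝ) ≤ 1 - θ j')
                  (by linarith : (0:ℝ) ≤ U j' - Lbreve w L U j'),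
                  mul_nonneg h3.le (by linarith : (0:ℝ) ≤ U j' - Ubreve w L U j')]
            · rw [Function.update_of_ne hj]; exact hLb j'
          · unfold fAff
            rw [sum_mul_update univ w (Lbreve w L U) i _]
            rw [if_pos (Finset.mem_univ i)]
            rw [hterm]
            linarith [hθa i, hMmdef]
          · intro J _
            rw [key0 J _, sum_mul_update J w (Lbreve w L U) i _]
            by_cases hiJ : i ∈ J
            · rw [if_pos hiJ, hterm]; linarith
            · rw [if_neg hiJ]; linarith
          · rw [key0 I _, sum_mul_update I w (Lbreve w L U) i _, if_neg hiI]
            ring
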